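/- Let S = {(0,0),(0,1),(0,2),(1,0),(1,1),(2,0)} index the degree-2 total order basis on the reference quadrilateral. Let M be the diagonal real S×S matrix with M_{(v,w),(v,w)} = 4/((2v+1)(2w+1)), i.e. M = diag(4, 4/3, 4/5, 4/3, 4/9, 4/5) in the listed order. For real parameters q0, q1, q2, let Q be the symmetric S×S matrix whose only nonzero entries are Q_{(0,2),(0,2)} = Q_{(2,0),(2,0)} = q0, Q_{(0,2),(2,0)} = Q_{(2,0),(0,2)} = q2, and Q_{(1,1),(1,1)} = q1. If q1 > −4/9, q0 > −4/9, and (5·q0 + 4)² − 25·q2² > 0, then M + Q is positive definite. -/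

import Mathlib

/-- The index set of the degree-2 total order basis: modes `(v,w)` with `v + w ≤ 2`. -/
def TO2 : Type := {p : Fin 3 × Fin 3 // (p.1 : ℕ) + (p.2 : ℕ) ≤ 2}

instance : Fintype TO2 := Subtype.fintype _
instance : DecidableEq TO2 := Subtype.instDecidableEq

/-- Modal mass matrix of the degree-2 total order Legendre basis:
`M_{(v,w),(v,w)} = 4/((2v+1)(2w+1))`. -/
noncomputable def massTO2 : Matrix TO2 TO2 ℝ :=
  Matrix.diagonal fun p =>
    (4 : ℝ) / (((2 * (p.val.1 : ℕ) + 1) * (2 * (p.val.2 : ℕ) + 1) : ℕ) : ℝ)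

/-- The symmetric filter matrix `Q(q0, q1, q2)` for the degree-2 total order basis. -/
def filterTO2 (q0 q1 q2 : ℝ) : Matrix TO2 TO2 ℝ :=
  fun i j =>
    if (i.val = (0, 2) ∧ j.val = (0, 2)) ∨ (i.val = (2, 0) ∧ j.val = (2, 0)) then q0
    else if (i.val = (0, 2) ∧ j.val = (2, 0)) ∨ (i.val = (2, 0) ∧ j.val = (0, 2)) then q2
    else if i.val = (1, 1) ∧ j.val = (1, 1) then q1
    else 0


set_option maxHeartbeats 1000000

private def m00 : TO2 := ⟨(0,0), by decide⟩
private def m01 : TO2 := ⟨(0,1), by decide⟩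
private def m02 : TO2 := ⟨(0,2), by decide⟩
private def m10 : TO2 := ⟨(1,0), by decide⟩
private def m11 : TO2 := ⟨(1,1), by decide⟩
private def m20 : TO2 := ⟨(2,0), by decide⟩

private lemma huniv : (Finset.univ : Finset TO2) = {m00, m01, m02, m10, m11, m20} := by decide

private lemma allmem : ∀ i : TO2, i = m00 ∨ i = m01 ∨ i = m02 ∨ i = m10 ∨ i = m11 ∨ i = m20 := by
  decide

private lemma herm (q0 q1 q2 : ℝ) : (massTO2 + filterTO2 q0 q1 q2).IsHermitian := by
  apply Matrix.IsHermitian.add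
  · ext i j
    simp only [Matrix.conjTranspose_apply, star_trivial, massTO2, Matrix.diagonal_apply]
    rcases eq_or_ne i j with h | h
    · subst h; rfl
    · simp [h, Ne.symm h]
  · ext i j
    simp only [Matrix.conjTranspose_apply, Matrix.transpose_apply, star_trivial]
    rcases allmem i with h|h|h|h|h|h <;> rcases allmem j with h'|h'|h'|h'|h'|h' <;>
      subst h <;> subst h' <;>
      simp (config := { decide := true }) [Matrix.conjTranspose_apply, Matrix.transpose_apply, filterTO2,
        m00, m01, m02, m10, m11, m20]

/-- For the degree-2 total order basis, if `q1 > -4/9`, `q0 > -4/9` and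
`(5 q0 + 4)² - 25 q2² > 0`, then `M + Q` is positive definite. -/
theorem stmt_2 (q0 q1 q2 : ℝ) (h1 : q1 > -4 / 9) (h0 : q0 > -4 / 9)
    (h2 : (5 * q0 + 4) ^ 2 - 25 * q2 ^ 2 > 0) :
    (massTO2 + filterTO2 q0 q1 q2).PosDef := by
  refine Matrix.PosDef.of_dotProduct_mulVec_pos (herm q0 q1 q2) fun x hx => ?_
  have key : dotProduct (star x) ((massTO2 + filterTO2 q0 q1 q2).mulVec x) =
      4*(x m00)^2 + 4/3*(x m01)^2 + 4/3*(x m10)^2 + (4/9+q1)*(x m11)^2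
      + (4/5+q0)*((x m02)^2+(x m20)^2) + 2*q2*(x m02)*(x m20) := by
    simp only [dotProduct, Matrix.mulVec, huniv,
      Finset.sum_insert (show m00 ∉ ({m01, m02, m10, m11, m20} : Finset TO2) by decide),
      Finset.sum_insert (show m01 ∉ ({m02, m10, m11, m20} : Finset TO2) by decide),
      Finset.sum_insert (show m02 ∉ ({m10, m11, m20} : Finset TO2) by decide),
      Finset.sum_insert (show m10 ∉ ({m11, m20} : Finset TO2) by decide),
      Finset.sum_insert (show m11 ∉ ({m20} : Finset TO2) by decide), Finset.sum_singleton,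
      Matrix.add_apply, massTO2, Matrix.diagonal_apply]
    simp (config := { decide := true }) [dotProduct, Matrix.mulVec, huniv,
      Finset.sum_insert, Finset.mem_insert, Finset.mem_singleton, Matrix.add_apply,
      massTO2, filterTO2, Matrix.diagonal, m00, m01, m02, m10, m11, m20]
    ring
  rw [key]
  obtain ⟨i, hi⟩ := Function.ne_iff.mp hx
  rw [Pi.zero_apply] at hi
  have ha : (4:ℝ)/5 + q0 > 0 := by linarith
  have hdet : ((4:ℝ)/5 + q0)^2 - q2^2 > 0 := by nlinarith
  have hblock : (4/5+q0)*((x m02)^2+(x m20)^2) + 2*q2*(x m02)*(x m20) ≥ 0 := by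
    nlinarith [sq_nonneg (q2 * x m02 + (4/5+q0) * x m20), sq_nonneg (x m02),
      mul_nonneg hdet.le (sq_nonneg (x m02))]
  rcases allmem i with h | h | h | h | h | h <;> subst h
  · nlinarith [hblock, sq_nonneg (x m01), sq_nonneg (x m10), sq_nonneg (x m11),
      pow_two_pos_of_ne_zero hi]
  · nlinarith [hblock, sq_nonneg (x m00), sq_nonneg (x m10), sq_nonneg (x m11),
      pow_two_pos_of_ne_zero hi]
  · have hu2 : 0 < x m02 ^ 2 := pow_two_pos_of_ne_zero hi
    have hB : 0 < (4/5+q0)*((x m02)^2+(x m20)^2) + 2*q2*(x m02)*(x m20) := by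
      nlinarith [sq_nonneg (q2 * x m02 + (4/5+q0) * x m20), mul_pos hdet hu2]
    nlinarith [sq_nonneg (x m00), sq_nonneg (x m01), sq_nonneg (x m10), sq_nonneg (x m11)]
  · nlinarith [hblock, sq_nonneg (x m00), sq_nonneg (x m01), sq_nonneg (x m11),
      pow_two_pos_of_ne_zero hi]
  · nlinarith [hblock, sq_nonneg (x m00), sq_nonneg (x m01), sq_nonneg (x m10),
      pow_two_pos_of_ne_zero hi]
  · have hu2 : 0 < x m20 ^ 2 := pow_two_pos_of_ne_zero hi
    have hB : 0 < (4/5+q0)*((x m02)^2+(x m20)^2) + 2*q2*(x m02)*(x m20) := by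
      nlinarith [sq_nonneg (q2 * x m20 + (4/5+q0) * x m02), mul_pos hdet hu2]
    nlinarith [sq_nonneg (x m00), sq_nonneg (x m01), sq_nonneg (x m10), sq_nonneg (x m11)]
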